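/- Let X and H be real Hilbert spaces with a continuous linear embedding ι : X → H, let X_N ⊆ X be a closed linear subspace, F : X → X* strongly monotone with constant ν > 0, and u* ∈ X with ⟨F(u*), v⟩ = 0 for all v ∈ X. Let u ∈ X_N and ψ ∈ X_N satisfy (ιψ, ιv)_H = ⟨F(u), v⟩ for all v ∈ X_N, suppose ũ ∈ X satisfies ⟨F(ũ), v⟩ = (ιψ, ιv)_H for all v ∈ X, and let η ≥ 0 satisfy (ιψ, ιw)_H − ⟨F(u), w⟩ ≤ η for all w ∈ X with ‖w‖_X = 1. Let ξ ∈ X and Ξ ∈ X_N satisfy (ξ, w)_X = (ιψ, ιw)_H for all w ∈ X and (Ξ, w)_X = (ιψ, ιw)_H for all w ∈ X_N. Then ‖u* − u‖_X ≤ η/ν + (1/ν)(‖Ξ‖_X² + ‖ξ − Ξ‖_X²)^{1/2}. -/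

import Mathlib

/-- Improved a posteriori error bound based on the nonlinear elliptic
reconstruction, with the linearization error expressed through the Riesz
representatives `ξ` and `Ξ` of the functional `w ↦ (ιψ, ιw)_H`. -/
theorem ilg_aposteriori_nonlinear_reconstruction_improved
    {X : Type*} [NormedAddCommGroup X] [InnerProductSpace ℝ X] [CompleteSpace X]
    {H : Type*} [NormedAddCommGroup H] [InnerProductSpace ℝ H] [CompleteSpace H]
    (ι : X →L[ℝ] H) (hι : Function.Injective ι)
    (XN : Submodule ℝ X) (hXN : IsClosed (XN : Set X))
    (F : X → X →L[ℝ] ℝ) (ν : ℝ) (hν : 0 < ν)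
    (hmono : ∀ u v : X, ν * ‖u - v‖ ^ 2 ≤ F u (u - v) - F v (u - v))
    (ustar : X) (hustar : ∀ v : X, F ustar v = 0)
    (u ψ : X) (hu : u ∈ XN) (hψ : ψ ∈ XN)
    (hriesz : ∀ v ∈ XN, (inner ℝ (ι ψ) (ι v) : ℝ) = F u v)
    (utilde : X)
    (hrec : ∀ v : X, F utilde v = (inner ℝ (ι ψ) (ι v) : ℝ))
    (η : ℝ) (hη0 : 0 ≤ η)
    (hres : ∀ w : X, ‖w‖ = 1 → (inner ℝ (ι ψ) (ι w) : ℝ) - F u w ≤ η)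
    (ξ : X) (hξ : ∀ w : X, (inner ℝ ξ w : ℝ) = (inner ℝ (ι ψ) (ι w) : ℝ))
    (Ξ : X) (hΞmem : Ξ ∈ XN)
    (hΞ : ∀ w ∈ XN, (inner ℝ Ξ w : ℝ) = (inner ℝ (ι ψ) (ι w) : ℝ)) :
    ‖ustar - u‖ ≤ η / ν + (1 / ν) * Real.sqrt (‖Ξ‖ ^ 2 + ‖ξ - Ξ‖ ^ 2) := by
  set e1 := utilde - u with he1
  set e2 := ustar - utilde with he2
  -- Step A: ‖e1‖ ≤ η / ν
  have hA : ‖e1‖ ≤ η / ν := by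
    rcases eq_or_ne e1 0 with h | h
    · simp [h]; positivity
    · have hn : 0 < ‖e1‖ := norm_pos_iff.mpr h
      have hw : ‖(‖e1‖⁻¹ • e1 : X)‖ = 1 := by
        simp [norm_smul, abs_of_pos (inv_pos.mpr hn), inv_mul_cancel₀ hn.ne']
      have key := hres (‖e1‖⁻¹ • e1) hw
      have key2 : ‖e1‖⁻¹ * ((inner ℝ (ι ψ) (ι e1) : ℝ) - F u e1) ≤ η := by
        simpa [map_smul, real_inner_smul_right, mul_sub] using key
      have hbound : (inner ℝ (ι ψ) (ι e1) : ℝ) - F u e1 ≤ η * ‖e1‖ := by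
        have := mul_le_mul_of_nonneg_left key2 hn.le
        calc (inner ℝ (ι ψ) (ι e1) : ℝ) - F u e1
            = ‖e1‖ * (‖e1‖⁻¹ * ((inner ℝ (ι ψ) (ι e1) : ℝ) - F u e1)) := by
              field_simp
          _ ≤ ‖e1‖ * η := this
          _ = η * ‖e1‖ := mul_comm _ _
      have hm := hmono utilde u
      have hF : F utilde e1 = (inner ℝ (ι ψ) (ι e1) : ℝ) := hrec e1
      have hsq : ν * ‖e1‖ ^ 2 ≤ η * ‖e1‖ := by
        calc ν * ‖e1‖ ^ 2 ≤ F utilde e1 - F u e1 := hm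
          _ = (inner ℝ (ι ψ) (ι e1) : ℝ) - F u e1 := by rw [hF]
          _ ≤ η * ‖e1‖ := hbound
      have : ν * ‖e1‖ ≤ η := by nlinarith
      rw [le_div_iff₀ hν]; linarith
  -- Step B: ‖e2‖ ≤ ‖ξ‖ / ν
  have hB : ‖e2‖ ≤ ‖ξ‖ / ν := by
    rcases eq_or_ne e2 0 with h | h
    · simp [h]; positivity
    · have hn : 0 < ‖e2‖ := norm_pos_iff.mpr h
      have hm := hmono ustar utilde
      have hsq : ν * ‖e2‖ ^ 2 ≤ ‖ξ‖ * ‖e2‖ := by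
        have hcs : -(inner ℝ ξ e2 : ℝ) ≤ ‖ξ‖ * ‖e2‖ := by
          have h1 : |(inner ℝ ξ e2 : ℝ)| ≤ ‖ξ‖ * ‖e2‖ := abs_real_inner_le_norm ξ e2
          linarith [neg_abs_le (inner ℝ ξ e2 : ℝ)]
        calc ν * ‖e2‖ ^ 2 ≤ F ustar e2 - F utilde e2 := hm
          _ = -(inner ℝ ξ e2 : ℝ) := by
              rw [hustar e2, hrec e2, hξ e2]; ring
          _ ≤ ‖ξ‖ * ‖e2‖ := hcs
      have : ν * ‖e2‖ ≤ ‖ξ‖ := by nlinarith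
      rw [le_div_iff₀ hν]; linarith
  -- Step C: ‖ξ‖ = sqrt (‖Ξ‖² + ‖ξ - Ξ‖²)
  have horth : (inner ℝ Ξ (ξ - Ξ) : ℝ) = 0 := by
    have h1 := hξ Ξ
    have h2 := hΞ Ξ hΞmem
    have h3 : (inner ℝ Ξ ξ : ℝ) = inner ℝ ξ Ξ := real_inner_comm _ _
    rw [inner_sub_right]; linarith
  have hnorm : ‖ξ‖ ^ 2 = ‖Ξ‖ ^ 2 + ‖ξ - Ξ‖ ^ 2 := by
    have hdecomp : ξ = Ξ + (ξ - Ξ) := by abel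
    calc ‖ξ‖ ^ 2 = ‖Ξ + (ξ - Ξ)‖ ^ 2 := by rw [← hdecomp]
      _ = ‖Ξ‖ ^ 2 + 2 * (inner ℝ Ξ (ξ - Ξ) : ℝ) + ‖ξ - Ξ‖ ^ 2 := norm_add_sq_real _ _
      _ = ‖Ξ‖ ^ 2 + ‖ξ - Ξ‖ ^ 2 := by rw [horth]; ring
  have hC : Real.sqrt (‖Ξ‖ ^ 2 + ‖ξ - Ξ‖ ^ 2) = ‖ξ‖ := by
    rw [← hnorm, Real.sqrt_sq (norm_nonneg _)]
  calc ‖ustar - u‖ = ‖e2 + e1‖ := by rw [he1, he2]; congr 1; abel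
    _ ≤ ‖e2‖ + ‖e1‖ := norm_add_le _ _
    _ ≤ ‖ξ‖ / ν + η / ν := add_le_add hB hA
    _ = η / ν + (1 / ν) * Real.sqrt (‖Ξ‖ ^ 2 + ‖ξ - Ξ‖ ^ 2) := by
        rw [hC]; ring
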